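/- Let g be a semisimple Lie algebra over an algebraically closed field of characteristic zero with parabolic subalgebra q, giving the grading g = ⊕_k g_k with q = ⊕_{k≥0} g_k and the nilradical of the opposite parabolic q_u^- = ⊕_{k<0} g_k. If h is a commutative Lie subalgebra of g with g = q ⊕ h (as vector spaces), then q_u^- is commutative. -/

import Mathlib

open scoped DirectSum

/-- Projection onto a graded component of an internal direct sum. -/
noncomputable def gradedProj {K L : Type*} [Field K] [AddCommGroup L] [Module K L]
    (g : ℤ → Submodule K L) (hinternal : DirectSum.IsInternal g) (m : ℤ) :
    L →ₗ[K] L :=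
  (g m).subtype ∘ₗ (DFinsupp.lapply m) ∘ₗ
    ((LinearEquiv.ofBijective (DirectSum.coeLinearMap g) hinternal).symm : L →ₗ[K] ⨁ i, g i)

lemma gradedProj_of_mem {K L : Type*} [Field K] [AddCommGroup L] [Module K L]
    (g : ℤ → Submodule K L) (hinternal : DirectSum.IsInternal g) {m : ℤ} {x : L}
    (hx : x ∈ g m) : gradedProj g hinternal m x = x := by
  simp only [gradedProj, LinearMap.coe_comp, Function.comp_apply, LinearEquiv.coe_coe,
    Submodule.coe_subtype]
  exact congrArg Subtype.val (hinternal.ofBijective_coeLinearMap_of_mem hx)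

lemma gradedProj_of_mem_ne {K L : Type*} [Field K] [AddCommGroup L] [Module K L]
    (g : ℤ → Submodule K L) (hinternal : DirectSum.IsInternal g) {m n : ℤ} {x : L}
    (hx : x ∈ g n) (hne : n ≠ m) : gradedProj g hinternal m x = 0 := by
  simp only [gradedProj, LinearMap.coe_comp, Function.comp_apply, LinearEquiv.coe_coe,
    Submodule.coe_subtype]
  exact (congrArg Subtype.val
    (hinternal.ofBijective_coeLinearMap_of_mem_ne hne hx)).trans rfl

/-- Induction principle for membership in a biSup of submodules. -/
lemma biSup_induction {K L : Type*} [Field K] [AddCommGroup L] [Module K L]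
    (g : ℤ → Submodule K L) (S : Set ℤ) {C : L → Prop} {x : L}
    (hx : x ∈ ⨆ k ∈ S, g k) (hp : ∀ k ∈ S, ∀ x ∈ g k, C x) (h0 : C 0)
    (hadd : ∀ x y, C x → C y → C (x + y)) : C x := by
  rw [show (⨆ k ∈ S, g k) = ⨆ k : S, g k from (iSup_subtype'' S g).symm] at hx
  exact Submodule.iSup_induction (motive := C) (fun k : S => g k) hx (fun k => hp k k.2) h0 hadd

theorem opposite_nilradical_commutative_of_commutative_complement
    {K L : Type*} [Field K] [IsAlgClosed K] [CharZero K]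
    [LieRing L] [LieAlgebra K L] [FiniteDimensional K L]
    [LieAlgebra.IsSemisimple K L]
    (g : ℤ → Submodule K L)
    (hbr : ∀ i j : ℤ, ∀ x ∈ g i, ∀ y ∈ g j, ⁅x, y⁆ ∈ g (i + j))
    (hinternal : DirectSum.IsInternal g)
    (h : LieSubalgebra K L)
    (hcomm : ∀ x ∈ h, ∀ y ∈ h, ⁅x, y⁆ = (0 : L))
    (hcompl : IsCompl (⨆ k ∈ {k : ℤ | 0 ≤ k}, g k) h.toSubmodule) :
    ∀ x ∈ (⨆ k ∈ {k : ℤ | k < 0}, g k),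
      ∀ y ∈ (⨆ k ∈ {k : ℤ | k < 0}, g k), ⁅x, y⁆ = (0 : L) := by
  set Q : Submodule K L := ⨆ k ∈ {k : ℤ | 0 ≤ k}, g k with hQ
  set π := gradedProj g hinternal
  -- key vanishing lemma for projections of brackets with one factor in Q
  have keyB : ∀ m c : ℤ, m - c < 0 → ∀ p ∈ Q, ∀ w ∈ g c, π m ⁅p, w⁆ = 0 := by
    intro m c hmc p hp w hw
    refine biSup_induction g _ (C := fun t => π m ⁅t, w⁆ = 0) hp (fun a ha pa hpa => ?_) ?_ (fun u v hu hv => ?_)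
    · have hmem : ⁅pa, w⁆ ∈ g (a + c) := hbr a c pa hpa w hw
      exact gradedProj_of_mem_ne g hinternal hmem (by simp only [Set.mem_setOf_eq] at ha; omega)
    · simp
    · rw [add_lie, map_add, hu, hv, add_zero]
  -- key homogeneous case
  have key : ∀ i j : ℤ, i < 0 → j < 0 → ∀ z ∈ g i, ∀ z' ∈ g j, ⁅z, z'⁆ = (0 : L) := by
    intro i j hi hj z hz z' hz'
    have htop : Q ⊔ h.toSubmodule = ⊤ := hcompl.sup_eq_top
    obtain ⟨p, hp, y, hy, hpy⟩ := Submodule.mem_sup.mp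
      (htop ▸ Submodule.mem_top : z ∈ Q ⊔ h.toSubmodule)
    obtain ⟨p', hp', y', hy', hpy'⟩ := Submodule.mem_sup.mp
      (htop ▸ Submodule.mem_top : z' ∈ Q ⊔ h.toSubmodule)
    have hyy' : ⁅y, y'⁆ = (0 : L) := hcomm y hy y' hy'
    have hexpand : ⁅z, z'⁆ = ⁅p, z'⁆ + ⁅z, p'⁆ - ⁅p, p'⁆ := by
      rw [← hpy, ← hpy']
      simp only [add_lie, lie_add]
      rw [hyy']
      abel
    have hmem : ⁅z, z'⁆ ∈ g (i + j) := hbr i j z hz z' hz'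
    have h1 : π (i + j) ⁅p, z'⁆ = 0 := keyB (i + j) j (by omega) p hp z' hz'
    have h2 : π (i + j) ⁅z, p'⁆ = 0 := by
      have : ⁅z, p'⁆ = -⁅p', z⁆ := (lie_skew z p').symm
      rw [this, map_neg, keyB (i + j) i (by omega) p' hp' z hz, neg_zero]
    have h3 : π (i + j) ⁅p, p'⁆ = 0 := by
      refine biSup_induction g _ (C := fun t => π (i + j) ⁅p, t⁆ = 0) hp' (fun b hb w hw => ?_) ?_ (fun u v hu hv => ?_)
      · exact keyB (i + j) b (by simp only [Set.mem_setOf_eq] at hb; omega) p hp w hw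
      · simp
      · rw [lie_add, map_add, hu, hv, add_zero]
    calc ⁅z, z'⁆ = π (i + j) ⁅z, z'⁆ := (gradedProj_of_mem g hinternal hmem).symm
      _ = π (i + j) ⁅p, z'⁆ + π (i + j) ⁅z, p'⁆ - π (i + j) ⁅p, p'⁆ := by
          rw [hexpand, map_sub, map_add]
      _ = 0 := by rw [h1, h2, h3]; simp
  -- extend to all of the negative part by bilinearity
  intro x hx y hy
  refine biSup_induction g _ (C := fun t => ⁅t, y⁆ = (0 : L)) hx (fun i hi z hz => ?_) ?_ (fun u v hu hv => ?_)
  · refine biSup_induction g _ (C := fun t => ⁅z, t⁆ = (0 : L)) hy (fun j hj z' hz' => ?_) ?_ (fun u v hu hv => ?_)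
    · exact key i j hi hj z hz z' hz'
    · simp
    · rw [lie_add, hu, hv, add_zero]
  · simp
  · rw [add_lie, hu, hv, add_zero]
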